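/- arXiv:1603.08601 — 3 statements merged into one kernel-verified Lean document; each statement's English description precedes it below -/
import Mathlib

section
/- Let G and G′ be totally pre-ordered abelian groups such that H := {g ∈ G : g ∼ 1} and H′ := {g ∈ G′ : g ∼ 1} are finite. If H ≅ H′ as groups and the ordered abelian groups (G/∼, ≤) and (G′/∼, ≤) are elementarily equivalent in the language of ordered groups, then (G, ≤) and (G′, ≤) are elementarily equivalent in the language {·, 1, ⁻¹, ≤} of pre-ordered groups. -/
/- STATEMENT 2: Let G and G′ be totally pre-ordered abelian groups such that
H := {g ∈ G : g ∼ 1} and H′ := {g ∈ G′ : g ∼ 1} are finite. If H ≅ H′ as groups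
and the ordered abelian groups (G/∼, ≤) and (G′/∼, ≤) are elementarily
equivalent in the language of ordered groups, then (G, ≤) and (G′, ≤) are
elementarily equivalent in the language {·, 1, ⁻¹, ≤} of pre-ordered groups. -/

open FirstOrder

/-- Function symbols for the language {·, 1, ⁻¹, ≤} of (pre-)ordered groups. -/
inductive POGFunc : ℕ → Type
  | one : POGFunc 0
  | inv : POGFunc 1
  | mul : POGFunc 2

/-- Relation symbols for the language {·, 1, ⁻¹, ≤} of (pre-)ordered groups. -/
inductive POGRel : ℕ → Type
  | le : POGRel 2

/-- The first-order language {·, 1, ⁻¹, ≤} of (pre-)ordered groups. -/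
def POGLang : Language := ⟨POGFunc, POGRel⟩

/-- The natural `POGLang`-structure on a group equipped with a binary relation. -/
def pogStructure (G : Type*) [Group G] (le : G → G → Prop) : POGLang.Structure G where
  funMap {n} f x :=
    match f with
    | .one => 1
    | .inv => (x 0)⁻¹
    | .mul => x 0 * x 1
  RelMap {n} r x :=
    match r with
    | .le => le (x 0) (x 1)

/-- A totally pre-ordered abelian group structure: a reflexive, transitive, total
binary relation on a commutative group, compatible with multiplication. -/
structure IsTotalPreorderedCommGroup {G : Type*} [CommGroup G] (le : G → G → Prop) : Prop where
  refl : ∀ g : G, le g g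
  trans : ∀ g h j : G, le g h → le h j → le g j
  total : ∀ g h : G, le g h ∨ le h g
  mul_right : ∀ g h j : G, le g h → le (g * j) (h * j)

/-- The subgroup H = {g ∈ G : g ∼ 1} of a totally pre-ordered abelian group. -/
def simSubgroup {G : Type*} [CommGroup G] (le : G → G → Prop)
    (h : IsTotalPreorderedCommGroup le) : Subgroup G where
  carrier := {g | le g 1 ∧ le 1 g}
  one_mem' := ⟨h.refl 1, h.refl 1⟩
  mul_mem' := by
    rintro a b ⟨ha1, h1a⟩ ⟨hb1, h1b⟩
    constructor
    · have h1 := h.mul_right a 1 b ha1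
      rw [one_mul] at h1
      exact h.trans _ _ _ h1 hb1
    · have h1 := h.mul_right 1 a b h1a
      rw [one_mul] at h1
      exact h.trans _ _ _ h1b h1
  inv_mem' := by
    rintro a ⟨ha1, h1a⟩
    refine ⟨?_, ?_⟩
    · simpa using h.mul_right 1 a a⁻¹ h1a
    · simpa using h.mul_right a 1 a⁻¹ ha1

/-- The induced order on the quotient G/∼ = G ⧸ H. -/
def quotLe {G : Type*} [CommGroup G] (le : G → G → Prop)
    (h : IsTotalPreorderedCommGroup le) :
    (G ⧸ simSubgroup le h) → (G ⧸ simSubgroup le h) → Prop :=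
  fun x y => ∃ a b : G, (a : G ⧸ simSubgroup le h) = x ∧
    (b : G ⧸ simSubgroup le h) = y ∧ le a b


open FirstOrder Language

section Translation

variable {A : Type*} [CommGroup A]

/-- Trivial `POGLang` structure on `A` (relation always true). -/
def trivStruct (A : Type*) [CommGroup A] : POGLang.Structure A :=
  pogStructure A fun _ _ => True

/-- Product structure on `A × M` where the order only reads the second component. -/
def prodStruct (A : Type*) [CommGroup A] {M : Type*} [CommGroup M] (leM : M → M → Prop) :
    POGLang.Structure (A × M) :=
  pogStructure (A × M) fun x y => leM x.2 y.2

theorem term_realize_prod {M : Type*} [CommGroup M] (leM : M → M → Prop) {β : Type*}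
    (t : POGLang.Term β) (v : β → A × M) :
    @Term.realize POGLang (A × M) (prodStruct A leM) β v t =
      (@Term.realize POGLang A (trivStruct A) β (fun i => (v i).1) t,
       @Term.realize POGLang M (pogStructure M leM) β (fun i => (v i).2) t) := by
  induction t with
  | var => rfl
  | @func n f ts ih =>
    cases f <;>
      simp only [Term.realize, prodStruct, trivStruct, pogStructure, ih] <;> rfl

variable [Fintype A] [DecidableEq A]

/-- Feferman–Vaught style translation. -/
noncomputable def Tr {α : Type*} : ∀ {n : ℕ}, (α → A) → (Fin n → A) →
    POGLang.BoundedFormula α n → POGLang.BoundedFormula α n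
  | _, _, _, .falsum => .falsum
  | _, vα, a, .equal t₁ t₂ =>
      if @Term.realize POGLang A (trivStruct A) _ (Sum.elim vα a) t₁ =
          @Term.realize POGLang A (trivStruct A) _ (Sum.elim vα a) t₂
      then .equal t₁ t₂ else .falsum
  | _, _, _, .rel R ts => .rel R ts
  | _, vα, a, .imp φ ψ => (Tr vα a φ).imp (Tr vα a ψ)
  | _, vα, a, .all φ =>
      BoundedFormula.iInf fun x : A => (Tr vα (Fin.snoc a x) φ).all

theorem realize_Tr {M : Type*} [CommGroup M] (leM : M → M → Prop) {α : Type*} :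
    ∀ {n : ℕ} (φ : POGLang.BoundedFormula α n) (v : α → A × M) (xs : Fin n → A × M),
    @BoundedFormula.Realize POGLang (A × M) (prodStruct A leM) α n φ v xs ↔
      @BoundedFormula.Realize POGLang M (pogStructure M leM) α n
        (Tr (fun i => (v i).1) (fun i => (xs i).1) φ)
        (fun i => (v i).2) (fun i => (xs i).2) := by
  intro n φ
  induction φ with
  | falsum => intro v xs; exact Iff.rfl
  | @equal n t₁ t₂ =>
    intro v xs
    have hfst : (fun i => ((Sum.elim v xs) i).1) = Sum.elim (fun i => (v i).1)
        (fun i => (xs i).1) := by funext i; cases i <;> rfl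
    have hsnd : (fun i => ((Sum.elim v xs) i).2) = Sum.elim (fun i => (v i).2)
        (fun i => (xs i).2) := by funext i; cases i <;> rfl
    have h1 := term_realize_prod (A := A) leM t₁ (Sum.elim v xs)
    have h2 := term_realize_prod (A := A) leM t₂ (Sum.elim v xs)
    show (@Term.realize POGLang (A × M) (prodStruct A leM) _ (Sum.elim v xs) t₁ =
        @Term.realize POGLang (A × M) (prodStruct A leM) _ (Sum.elim v xs) t₂) ↔ _
    rw [h1, h2, Prod.ext_iff]
    simp only [Tr, hfst, hsnd]
    split_ifs with hA
    · exact ⟨fun hc => hc.2, fun hc => ⟨hA, hc⟩⟩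
    · exact iff_of_false (fun hc => hA hc.1) fun hc => hc.elim
  | @rel n k R ts =>
    intro v xs
    cases R
    have hsnd : (fun i => ((Sum.elim v xs) i).2) = Sum.elim (fun i => (v i).2)
        (fun i => (xs i).2) := by funext i; cases i <;> rfl
    have h1 := term_realize_prod (A := A) leM (ts 0) (Sum.elim v xs)
    have h2 := term_realize_prod (A := A) leM (ts 1) (Sum.elim v xs)
    show leM (@Term.realize POGLang (A × M) (prodStruct A leM) _ (Sum.elim v xs) (ts 0)).2
        (@Term.realize POGLang (A × M) (prodStruct A leM) _ (Sum.elim v xs) (ts 1)).2 ↔ _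
    rw [h1, h2]
    simp only [Tr, hsnd]
    exact Iff.rfl
  | @imp n φ ψ ihφ ihψ =>
    intro v xs
    exact imp_congr (ihφ v xs) (ihψ v xs)
  | @all n φ ih =>
    intro v xs
    show (∀ p : A × M,
        @BoundedFormula.Realize POGLang (A × M) (prodStruct A leM) α (n+1) φ v (Fin.snoc xs p)) ↔ _
    simp only [Tr, BoundedFormula.realize_iInf, BoundedFormula.realize_all,
      Finset.mem_univ, true_imp_iff]
    constructor
    · intro hp x m
      have := (ih v (Fin.snoc xs (x, m))).mp (hp (x, m))
      have e1 : (fun i => ((Fin.snoc xs (x, m) : Fin (n+1) → A × M) i).1) =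
          Fin.snoc (fun i => (xs i).1) x := by
        funext i; refine Fin.lastCases ?_ ?_ i <;> simp
      have e2 : (fun i => ((Fin.snoc xs (x, m) : Fin (n+1) → A × M) i).2) =
          Fin.snoc (fun i => (xs i).2) m := by
        funext i; refine Fin.lastCases ?_ ?_ i <;> simp
      rwa [e1, e2] at this
    · intro hp p
      have e1 : (fun i => ((Fin.snoc xs p : Fin (n+1) → A × M) i).1) =
          Fin.snoc (fun i => (xs i).1) p.1 := by
        funext i; refine Fin.lastCases ?_ ?_ i <;> simp
      have e2 : (fun i => ((Fin.snoc xs p : Fin (n+1) → A × M) i).2) =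
          Fin.snoc (fun i => (xs i).2) p.2 := by
        funext i; refine Fin.lastCases ?_ ?_ i <;> simp
      refine (ih v (Fin.snoc xs p)).mpr ?_
      rw [e1, e2]
      exact hp p.1 p.2

/-- Sentence-level translation. -/
noncomputable def Tr0 (A : Type*) [CommGroup A] [Fintype A] [DecidableEq A]
    (φ : POGLang.Sentence) : POGLang.Sentence :=
  Tr (A := A) (fun e => Empty.elim e) (fun i => Fin.elim0 i) φ

theorem realize_Tr0 {M : Type*} [CommGroup M] (leM : M → M → Prop) (φ : POGLang.Sentence) :
    @Sentence.Realize POGLang (A × M) (prodStruct A leM) φ ↔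
      @Sentence.Realize POGLang M (pogStructure M leM) (Tr0 A φ) := by
  have h := realize_Tr (A := A) leM φ (fun e => Empty.elim e) (fun i => Fin.elim0 i)
  have e0 : (fun i : Empty => ((Empty.elim i : A × M)).1) = fun e : Empty => Empty.elim e := by
    funext e; exact e.elim
  have e1 : (fun i : Fin 0 => ((Fin.elim0 i : A × M)).1) = fun i : Fin 0 => Fin.elim0 i := by
    funext i; exact i.elim0
  have e2 : (fun i : Empty => ((Empty.elim i : A × M)).2) = fun e : Empty => Empty.elim e := by
    funext e; exact e.elim
  have e3 : (fun i : Fin 0 => ((Fin.elim0 i : A × M)).2) = fun i : Fin 0 => Fin.elim0 i := by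
    funext i; exact i.elim0
  unfold Sentence.Realize Formula.Realize Tr0
  rw [e0, e1, e2, e3] at h
  have d1 : (default : Empty → A × M) = fun e : Empty => Empty.elim e := funext fun e => e.elim
  have d2 : (default : Fin 0 → A × M) = fun i : Fin 0 => Fin.elim0 i := funext fun i => i.elim0
  have d3 : (default : Empty → M) = fun e : Empty => Empty.elim e := funext fun e => e.elim
  have d4 : (default : Fin 0 → M) = fun i : Fin 0 => Fin.elim0 i := funext fun i => i.elim0
  rw [d1, d2, d3, d4]
  convert h using 2 <;> funext x <;> first | exact x.elim | exact x.elim0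

theorem prod_elementarilyEquivalent {M N : Type*} [CommGroup M] [CommGroup N]
    (leM : M → M → Prop) (leN : N → N → Prop)
    (hMN : @ElementarilyEquivalent POGLang M N (pogStructure M leM) (pogStructure N leN)) :
    @ElementarilyEquivalent POGLang (A × M) (A × N) (prodStruct A leM) (prodStruct A leN) := by
  rw [@elementarilyEquivalent_iff POGLang (A × M) (A × N) (prodStruct A leM) (prodStruct A leN)]
  intro φ
  rw [realize_Tr0 (A := A) leM φ, realize_Tr0 (A := A) leN φ]
  exact (@elementarilyEquivalent_iff POGLang M N
    (pogStructure M leM) (pogStructure N leN)).mp hMN (Tr0 A φ)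

end Translation
section POGFacts

variable {G : Type*} [CommGroup G] {le : G → G → Prop} (h : IsTotalPreorderedCommGroup le)

include h

theorem le_one_pow_of {g : G} (hg : le 1 g) : ∀ k : ℕ, le 1 (g ^ k) := by
  intro k
  induction k with
  | zero => rw [pow_zero]; exact h.refl 1
  | succ k ih =>
    have h1 : le (1 * g ^ k) (g * g ^ k) := h.mul_right 1 g (g ^ k) hg
    rw [one_mul] at h1
    have h3 : le 1 (g * g ^ k) := h.trans _ _ _ ih h1
    rwa [← pow_succ'] at h3

theorem pow_le_one_of {g : G} (hg : le g 1) : ∀ k : ℕ, le (g ^ k) 1 := by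
  intro k
  induction k with
  | zero => rw [pow_zero]; exact h.refl 1
  | succ k ih =>
    have h1 : le (g * g ^ k) (1 * g ^ k) := h.mul_right g 1 (g ^ k) hg
    rw [one_mul] at h1
    have h3 : le (g * g ^ k) 1 := h.trans _ _ _ h1 ih
    rwa [← pow_succ'] at h3

/-- Purity: if `g ^ m ∈ H` for some `m > 0`, then `g ∈ H`. -/
theorem mem_simSubgroup_of_pow {g : G} {m : ℕ} (hm : 0 < m)
    (hg : g ^ m ∈ simSubgroup le h) : g ∈ simSubgroup le h := by
  obtain ⟨k, rfl⟩ := Nat.exists_eq_succ_of_ne_zero hm.ne'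
  rcases h.total 1 g with h1g | hg1
  · -- 1 ≤ g; then g ≤ g^(k+1) ≤ 1
    have h1 : le (1 * g) (g ^ k * g) := h.mul_right 1 (g ^ k) g (le_one_pow_of h h1g k)
    rw [one_mul, ← pow_succ] at h1
    exact ⟨h.trans _ _ _ h1 hg.1, h1g⟩
  · -- g ≤ 1; then 1 ≤ g^(k+1) ≤ g
    have h1 : le (g ^ k * g) (1 * g) := h.mul_right (g ^ k) 1 g (pow_le_one_of h hg1 k)
    rw [one_mul, ← pow_succ] at h1
    exact ⟨hg1, h.trans _ _ _ hg.2 h1⟩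

theorem le_iff_quotLe (g g' : G) :
    le g g' ↔ quotLe le h (g : G ⧸ simSubgroup le h) (g' : G ⧸ simSubgroup le h) := by
  constructor
  · intro hgg'
    exact ⟨g, g', rfl, rfl, hgg'⟩
  · rintro ⟨a, b, ha, hb, hab⟩
    have ha' : a⁻¹ * g ∈ simSubgroup le h := (QuotientGroup.eq).mp ha
    have hb' : b⁻¹ * g' ∈ simSubgroup le h := (QuotientGroup.eq).mp hb
    have h1 : le (a⁻¹ * g * a) (1 * a) := h.mul_right _ 1 a ha'.1
    rw [one_mul, mul_comm (a⁻¹) g, mul_assoc, inv_mul_cancel, mul_one] at h1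
    have h2 : le (1 * b) (b⁻¹ * g' * b) := h.mul_right 1 _ b hb'.2
    rw [one_mul, mul_comm (b⁻¹) g', mul_assoc, inv_mul_cancel, mul_one] at h2
    exact h.trans _ _ _ h1 (h.trans _ _ _ hab h2)

end POGFacts
section Retraction

open CharacterModule

/-- The value of `ofSpanSingleton b` at `b` when `b` has finite positive order. -/
theorem ofSpanSingleton_apply_self_of_orderOf_ne_zero {B : Type*} [AddCommGroup B] (b : B)
    (hb : addOrderOf b ≠ 0) :
    ofSpanSingleton b ⟨b, Submodule.mem_span_singleton_self b⟩ =
      (((addOrderOf b : ℚ)⁻¹ : ℚ) : AddCircle (1 : ℚ)) := by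
  erw [ofSpanSingleton, LinearMap.toAddMonoidHom_coe, LinearMap.comp_apply,
    intSpanEquivQuotAddOrderOf_apply_self, Submodule.liftQSpanSingleton_apply,
    AddMonoidHom.coe_toIntLinearMap, int.divByNat, if_neg hb, LinearMap.toSpanSingleton_apply_one]

/-- Key step: a retraction of an abelian group onto a maximal-order cyclic subgroup of a
finite pure subgroup. -/
theorem exists_cyclic_retraction {A : Type*} [AddCommGroup A] (H : AddSubgroup A) [Finite H]
    (hpure : ∀ m : ℕ, 0 < m → ∀ g : A, m • g ∈ H → g ∈ H) :
    ∃ (r : A →+ A) (h₀ : A), h₀ ∈ H ∧ addOrderOf h₀ = AddMonoid.exponent H ∧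
      (∀ a : A, ∃ j : ℤ, r a = j • h₀) ∧ r h₀ = h₀ := by
  classical
  set n := AddMonoid.exponent ↥H with hn_def
  have hn : n ≠ 0 := AddMonoid.exponent_ne_zero_of_finite
  have hnpos : 0 < n := Nat.pos_of_ne_zero hn
  obtain ⟨h', hh'⟩ := AddMonoid.exists_addOrderOf_eq_exponent
    (AddMonoid.ExponentExists.of_finite (G := ↥H))
  set h₀ : A := (h' : A) with h0_def
  have hord : addOrderOf h₀ = n := by
    rw [hn_def, ← hh']
    exact addOrderOf_injective H.subtype H.subtype_injective h'
  have hkill : ∀ x ∈ H, n • x = 0 := by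
    intro x hx
    have := AddMonoid.exponent_nsmul_eq_zero (⟨x, hx⟩ : ↥H)
    exact congrArg Subtype.val this
  have hn0 : n • h₀ = 0 := hkill h₀ h'.2
  -- quotient by n-th multiples
  set N : AddSubgroup A := (nsmulAddMonoidHom n : A →+ A).range with hN_def
  set B := A ⧸ N with hB_def
  set π : A →+ B := QuotientAddGroup.mk' N with hπ_def
  have hπ0 : ∀ a : A, π (n • a) = 0 := by
    intro a
    exact (QuotientAddGroup.eq_zero_iff _).mpr ⟨a, rfl⟩
  have hBtor : ∀ x : B, n • x = 0 := by
    intro x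
    obtain ⟨a, rfl⟩ := QuotientAddGroup.mk'_surjective N x
    rw [← map_nsmul]
    exact hπ0 a
  have hkey : ∀ m : ℕ, m • h₀ ∈ N → n ∣ m := by
    rintro m ⟨g, hg⟩
    have hgH : g ∈ H := by
      refine hpure n hnpos g ?_
      show n • g ∈ H
      have : n • g = m • h₀ := hg
      rw [this]
      exact AddSubgroup.nsmul_mem H h'.2 m
    have hg0 : (m • h₀ : A) = 0 := by
      have : n • g = m • h₀ := hg
      rw [← this, hkill g hgH]
    rw [← hord]
    exact addOrderOf_dvd_of_nsmul_eq_zero hg0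
  set b : B := π h₀ with hb_def
  have hbord : addOrderOf b = n := by
    apply Nat.dvd_antisymm
    · rw [← hord]; exact addOrderOf_map_dvd π h₀
    · refine hkey _ ((QuotientAddGroup.eq_zero_iff _).mp ?_)
      show π (addOrderOf b • h₀) = 0
      rw [map_nsmul]
      exact addOrderOf_nsmul_eq_zero b
  have hbord0 : addOrderOf b ≠ 0 := by rw [hbord]; exact hn
  -- extend the canonical character of ⟨b⟩ to B
  obtain ⟨χ, hχ⟩ := CharacterModule.dual_surjective_of_injective (R := ℤ)
    (Submodule.subtype (ℤ ∙ b)) (Submodule.injective_subtype _) (ofSpanSingleton b)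
  set u : AddCircle (1 : ℚ) := (((n : ℚ)⁻¹ : ℚ) : AddCircle (1 : ℚ)) with hu_def
  have hχb : χ b = u := by
    have h1 := DFunLike.congr_fun hχ ⟨b, Submodule.mem_span_singleton_self b⟩
    have h2 : χ b = ofSpanSingleton b ⟨b, Submodule.mem_span_singleton_self b⟩ := h1
    rw [h2, ofSpanSingleton_apply_self_of_orderOf_ne_zero b hbord0, hbord]
  -- the cyclic subgroup of the circle
  have hnu : (n : ℤ) • u = 0 := by
    rw [hu_def, ← AddCircle.coe_zsmul]
    have : ((n : ℤ) • ((n : ℚ)⁻¹ : ℚ) : ℚ) = 1 := by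
      rw [zsmul_eq_mul]
      push_cast
      rw [mul_inv_cancel₀ (by exact_mod_cast hn)]
    rw [this]
    exact (AddCircle.coe_eq_zero_iff _).mpr ⟨1, by simp⟩
  set eZ : ℤ →+ AddCircle (1 : ℚ) := zmultiplesHom _ u with heZ_def
  have heZn : eZ (n : ℤ) = 0 := hnu
  set e : ZMod n →+ AddCircle (1 : ℚ) := ZMod.lift n ⟨eZ, heZn⟩ with he_def
  have he_coe : ∀ z : ℤ, e (z : ZMod n) = z • u := fun z => ZMod.lift_coe n ⟨eZ, heZn⟩ z
  have hdvd_of_smul_zero : ∀ z : ℤ, z • u = 0 → (n : ℤ) ∣ z := by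
    intro z hz
    rw [hu_def, ← AddCircle.coe_zsmul, AddCircle.coe_eq_zero_iff] at hz
    obtain ⟨w, hw⟩ := hz
    have : (z : ℚ) * (n : ℚ)⁻¹ = (w : ℚ) := by
      rw [zsmul_eq_mul] at hw
      simpa using hw.symm
    have hzw : (z : ℚ) = (w : ℚ) * (n : ℚ) := by
      field_simp at this
      linarith [this]
    exact ⟨w, by exact_mod_cast hzw.trans (mul_comm (w : ℚ) (n : ℚ))⟩
  have he_inj : Function.Injective e := by
    intro x y hxy
    obtain ⟨zx, rfl⟩ := ZMod.intCast_surjective x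
    obtain ⟨zy, rfl⟩ := ZMod.intCast_surjective y
    have : (zx - zy) • u = 0 := by
      rw [sub_smul, ← he_coe zx, ← he_coe zy, hxy, sub_self]
    have := hdvd_of_smul_zero _ this
    have : ((zx - zy : ℤ) : ZMod n) = 0 := (ZMod.intCast_zmod_eq_zero_iff_dvd _ _).mpr this
    rwa [Int.cast_sub, sub_eq_zero] at this
  have hrange : ∀ y : AddCircle (1 : ℚ), n • y = 0 → ∃ k : ZMod n, e k = y := by
    intro y hy
    obtain ⟨q, rfl⟩ := QuotientAddGroup.mk_surjective y
    rw [← AddCircle.coe_nsmul, AddCircle.coe_eq_zero_iff] at hy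
    obtain ⟨w, hw⟩ := hy
    refine ⟨((w : ℤ) : ZMod n), ?_⟩
    rw [he_coe w, hu_def, ← AddCircle.coe_zsmul]
    congr 1
    have hq : (n : ℚ) * q = (w : ℚ) := by
      rw [nsmul_eq_mul] at hw
      simpa using hw.symm
    rw [zsmul_eq_mul]
    field_simp
    linarith [hq]
  -- the homomorphism f : A →+ ZMod n
  have hmem : ∀ a : A, ∃ k : ZMod n, e k = χ (π a) := by
    intro a
    refine hrange _ ?_
    rw [← map_nsmul, hBtor (π a)]
    exact map_zero χ
  set finv : AddCircle (1 : ℚ) → ZMod n := Function.invFun e with hfinv_def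
  have hfinv : ∀ a : A, e (finv (χ (π a))) = χ (π a) := by
    intro a
    obtain ⟨k, hk⟩ := hmem a
    rw [← hk]
    exact congrArg e (Function.leftInverse_invFun he_inj k)
  set f : A →+ ZMod n :=
    { toFun := fun a => finv (χ (π a))
      map_zero' := he_inj (by rw [hfinv 0, map_zero, map_zero, map_zero])
      map_add' := fun a a' => he_inj (by
        rw [map_add e, hfinv (a + a'), map_add, map_add, hfinv a, hfinv a']) } with hf_def
  have hf0 : f h₀ = 1 := by
    apply he_inj
    show e (finv (χ (π h₀))) = e 1
    rw [hfinv h₀, ← hb_def, hχb]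
    have : ((1 : ℤ) : ZMod n) = (1 : ZMod n) := by push_cast; rfl
    rw [← this, he_coe 1, one_zsmul]
  -- the homomorphism back into A
  set gZ : ℤ →+ A := zmultiplesHom A h₀ with hgZ_def
  have hgZn : gZ (n : ℤ) = 0 := by
    show (n : ℤ) • h₀ = 0
    rw [natCast_zsmul]
    exact hn0
  set g : ZMod n →+ A := ZMod.lift n ⟨gZ, hgZn⟩ with hg_def
  have hg_coe : ∀ z : ℤ, g (z : ZMod n) = z • h₀ := fun z => ZMod.lift_coe n ⟨gZ, hgZn⟩ z
  refine ⟨g.comp f, h₀, h'.2, hord, ?_, ?_⟩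
  · intro a
    obtain ⟨z, hz⟩ := ZMod.intCast_surjective (f a)
    exact ⟨z, by rw [AddMonoidHom.comp_apply, ← hz, hg_coe z]⟩
  · rw [AddMonoidHom.comp_apply, hf0]
    have : ((1 : ℤ) : ZMod n) = (1 : ZMod n) := by push_cast; rfl
    rw [← this, hg_coe 1, one_zsmul]

end Retraction
section FullRetraction

universe u

theorem exists_retraction_aux : ∀ (k : ℕ) (A : Type u) [AddCommGroup A] (H : AddSubgroup A),
    Finite ↥H → Nat.card ↥H = k → (∀ m : ℕ, 0 < m → ∀ g : A, m • g ∈ H → g ∈ H) →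
    ∃ r : A →+ A, (∀ a, r a ∈ H) ∧ (∀ x ∈ H, r x = x) := by
  intro k
  induction k using Nat.strong_induction_on with
  | _ k ih =>
    intro A _ H hfin hcard hpure
    by_cases hbot : H = ⊥
    · refine ⟨0, fun a => ?_, fun x hx => ?_⟩
      · exact H.zero_mem
      · rw [hbot, AddSubgroup.mem_bot] at hx
        rw [hx]
        rfl
    · haveI : Finite ↥H := hfin
      haveI hnt : Nontrivial ↥H := by
        rcases H.bot_or_nontrivial with hb | hnt
        · exact absurd hb hbot
        · exact hnt
      have hexp : 1 < AddMonoid.exponent ↥H := AddMonoid.one_lt_exponent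
      obtain ⟨r₁, h₀, h₀H, hordh₀, hr₁range, hr₁fix⟩ := exists_cyclic_retraction H hpure
      have h₀ne : h₀ ≠ 0 := by
        intro h0
        rw [h0, addOrderOf_zero] at hordh₀
        omega
      have hfixz : ∀ j : ℤ, r₁ (j • h₀) = j • h₀ := by
        intro j
        rw [map_zsmul, hr₁fix]
      have hidem : ∀ a : A, r₁ (r₁ a) = r₁ a := by
        intro a
        obtain ⟨j, hj⟩ := hr₁range a
        rw [hj, hfixz]
      set K : AddSubgroup A := r₁.ker with hK_def
      have hr₁H : ∀ a, r₁ a ∈ H := by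
        intro a
        obtain ⟨j, hj⟩ := hr₁range a
        rw [hj]
        exact AddSubgroup.zsmul_mem H h₀H j
      set H₂ : AddSubgroup ↥K := H.addSubgroupOf K with hH2_def
      have hmemH₂ : ∀ x : ↥K, x ∈ H₂ ↔ (x : A) ∈ H := fun x => Iff.rfl
      have e2 : ↥H₂ ≃ ↥(H ⊓ K : AddSubgroup A) :=
        { toFun := fun x => ⟨((x : ↥K) : A), ⟨x.2, ((x : ↥K)).2⟩⟩
          invFun := fun y => ⟨⟨(y : A), y.2.2⟩, y.2.1⟩
          left_inv := fun x => rfl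
          right_inv := fun y => rfl }
      haveI : Finite ↥(H ⊓ K : AddSubgroup A) :=
        Finite.of_injective (fun y : ↥(H ⊓ K : AddSubgroup A) => (⟨y.1, y.2.1⟩ : ↥H))
          (by
            intro a b hab
            have h1 := congrArg (fun z : ↥H => (z : A)) hab
            exact Subtype.ext h1)
      haveI hfin2 : Finite ↥H₂ := Finite.of_equiv _ e2.symm
      have hcard2 : Nat.card ↥H₂ < k := by
        have hHK : ((H ⊓ K : AddSubgroup A) : Set A) ⊂ (H : Set A) := by
          constructor
          · exact fun x hx => hx.1
          · intro hsub
            have h1 : h₀ ∈ H ⊓ K := hsub h₀H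
            have h2 : r₁ h₀ = 0 := h1.2
            rw [hr₁fix] at h2
            exact h₀ne h2
        haveI : Finite ((H : Set A) : Type u) := hfin
        calc Nat.card ↥H₂ = Nat.card ↥(H ⊓ K : AddSubgroup A) := Nat.card_congr e2
          _ = ((H ⊓ K : AddSubgroup A) : Set A).ncard := Nat.card_coe_set_eq _
          _ < ((H : Set A)).ncard := Set.ncard_lt_ncard hHK (Set.toFinite _)
          _ = Nat.card ↥H := (Nat.card_coe_set_eq _).symm
          _ = k := hcard
      have hpure2 : ∀ m : ℕ, 0 < m → ∀ g : ↥K, m • g ∈ H₂ → g ∈ H₂ := by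
        intro m hm g hg
        have : (m • g : ↥K) = (⟨m • (g : A), by exact (m • g).2⟩ : ↥K) := rfl
        have hg' : m • (g : A) ∈ H := hg
        exact hpure m hm (g : A) hg'
      obtain ⟨r₂, hr₂range, hr₂fix⟩ :=
        ih (Nat.card ↥H₂) hcard2 ↥K H₂ hfin2 rfl hpure2
      -- assemble
      set p : A →+ A := AddMonoidHom.id A - r₁ with hp_def
      have hpK : ∀ a : A, p a ∈ K := by
        intro a
        show r₁ (a - r₁ a) = 0
        rw [map_sub, hidem, sub_self]
      set q : A →+ ↥K := p.codRestrict K hpK with hq_def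
      have hq_val : ∀ a : A, ((q a : ↥K) : A) = a - r₁ a := fun a => rfl
      set r : A →+ A := r₁ + K.subtype.comp (r₂.comp q) with hr_def
      have hr_apply : ∀ a : A, r a = r₁ a + ((r₂ (q a) : ↥K) : A) := fun a => rfl
      refine ⟨r, fun a => ?_, fun x hx => ?_⟩
      · rw [hr_apply]
        exact H.add_mem (hr₁H a) (hr₂range (q a))
      · have hqx : q x ∈ H₂ := by
          rw [hmemH₂, hq_val]
          exact H.sub_mem hx (hr₁H x)
        rw [hr_apply, hr₂fix (q x) hqx, hq_val]
        abel

/-- Multiplicative version: a finite pure subgroup admits a retraction. -/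
theorem exists_mul_retraction {G : Type u} [CommGroup G] (H : Subgroup G) [Finite ↥H]
    (hpure : ∀ m : ℕ, 0 < m → ∀ g : G, g ^ m ∈ H → g ∈ H) :
    ∃ ρ : G →* G, (∀ g, ρ g ∈ H) ∧ (∀ x ∈ H, ρ x = x) := by
  set H' : AddSubgroup (Additive G) := Subgroup.toAddSubgroup H with hH'_def
  haveI : Finite ↥H' := Finite.of_equiv ↥H (Equiv.refl _)
  have hpure' : ∀ m : ℕ, 0 < m → ∀ g : Additive G, m • g ∈ H' → g ∈ H' := by
    intro m hm g hg
    exact hpure m hm (Additive.toMul g) hg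
  obtain ⟨r, hrange, hfix⟩ := exists_retraction_aux (Nat.card ↥H') (Additive G) H'
    inferInstance rfl hpure'
  refine ⟨{ toFun := fun g => Additive.toMul (r (Additive.ofMul g))
            map_one' := ?_
            map_mul' := ?_ }, fun g => ?_, fun x hx => ?_⟩
  · show Additive.toMul (r 0) = 1
    rw [map_zero]
    rfl
  · intro a b
    show Additive.toMul (r (Additive.ofMul a + Additive.ofMul b)) = _
    rw [map_add]
    rfl
  · exact hrange (Additive.ofMul g)
  · show Additive.toMul (r (Additive.ofMul x)) = x
    rw [hfix (Additive.ofMul x) hx]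
    rfl

end FullRetraction
section Assembly

open FirstOrder Language

variable {G : Type*} [CommGroup G]

/-- The splitting: `G` is isomorphic, as a `POGLang`-structure, to `H × G⧸H`. -/
theorem split_elementarilyEquivalent (le : G → G → Prop) (h : IsTotalPreorderedCommGroup le)
    [Finite ↥(simSubgroup le h)] :
    @ElementarilyEquivalent POGLang G (↥(simSubgroup le h) × (G ⧸ simSubgroup le h))
      (pogStructure G le) (prodStruct ↥(simSubgroup le h) (quotLe le h)) := by
  classical
  set H := simSubgroup le h with hH_def
  obtain ⟨ρ, hρH, hρfix⟩ := exists_mul_retraction H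
    (fun m hm g hg => mem_simSubgroup_of_pow h hm hg)
  letI SG : POGLang.Structure G := pogStructure G le
  letI SP : POGLang.Structure (↥H × (G ⧸ H)) := prodStruct ↥H (quotLe le h)
  set Ψ : G → ↥H × (G ⧸ H) := fun g => (⟨ρ g, hρH g⟩, (g : G ⧸ H)) with hΨ_def
  have hinj : Function.Injective Ψ := by
    intro a b hab
    have h1 : ρ a = ρ b := congrArg (fun p => ((p.1 : ↥H) : G)) hab
    have h2 : (a : G ⧸ H) = (b : G ⧸ H) := congrArg Prod.snd hab
    have h3 : a⁻¹ * b ∈ H := QuotientGroup.eq.mp h2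
    have h4 : ρ (a⁻¹ * b) = a⁻¹ * b := hρfix _ h3
    have h5 : ρ (a⁻¹ * b) = (ρ a)⁻¹ * ρ b := by rw [map_mul, map_inv]
    rw [h4, h1, inv_mul_cancel] at h5
    have h6 : b = a * (a⁻¹ * b) := by group
    rw [h6, h5, mul_one]
  have hsurj : Function.Surjective Ψ := by
    rintro ⟨⟨y, hy⟩, qa⟩
    obtain ⟨a, rfl⟩ := QuotientGroup.mk_surjective qa
    refine ⟨a * ((ρ a)⁻¹ * y), ?_⟩
    have hmem : (ρ a)⁻¹ * y ∈ H := H.mul_mem (H.inv_mem (hρH a)) hy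
    have h1 : ρ (a * ((ρ a)⁻¹ * y)) = y := by
      rw [map_mul, hρfix _ hmem]
      group
    refine Prod.ext (Subtype.ext ?_) ?_
    · exact h1
    · exact QuotientGroup.mk_mul_of_mem a hmem
  set g : @Language.Equiv POGLang G (↥H × (G ⧸ H)) SG SP :=
    { toEquiv := Equiv.ofBijective Ψ ⟨hinj, hsurj⟩
      map_fun' := by
        intro n f x
        cases f
        · exact Prod.ext (Subtype.ext (map_one ρ)) rfl
        · exact Prod.ext (Subtype.ext (map_inv ρ _)) rfl
        · exact Prod.ext (Subtype.ext (map_mul ρ _ _)) rfl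
      map_rel' := by
        intro n r x
        cases r
        exact (le_iff_quotLe h (x 0) (x 1)).symm } with hg_def
  exact StrongHomClass.elementarilyEquivalent g

/-- Transport along an isomorphism of the (order-irrelevant) first factor. -/
theorem firstFactor_elementarilyEquivalent {A A' M : Type*} [CommGroup A] [CommGroup A']
    [CommGroup M] (leM : M → M → Prop) (e : A ≃* A') :
    @ElementarilyEquivalent POGLang (A × M) (A' × M)
      (prodStruct A leM) (prodStruct A' leM) := by
  letI S1 : POGLang.Structure (A × M) := prodStruct A leM
  letI S2 : POGLang.Structure (A' × M) := prodStruct A' leM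
  set g : @Language.Equiv POGLang (A × M) (A' × M) S1 S2 :=
    { toEquiv := Equiv.prodCongr e.toEquiv (Equiv.refl M)
      map_fun' := by
        intro n f x
        cases f
        · exact Prod.ext (map_one e) rfl
        · exact Prod.ext (map_inv e _) rfl
        · exact Prod.ext (map_mul e _ _) rfl
      map_rel' := by
        intro n r x
        cases r
        exact Iff.rfl }
  exact StrongHomClass.elementarilyEquivalent g

end Assembly
theorem elementarilyEquivalent_of_sim_iso_and_quot_equiv
    {G G' : Type*} [CommGroup G] [CommGroup G']
    (le : G → G → Prop) (le' : G' → G' → Prop)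
    (h : IsTotalPreorderedCommGroup le) (h' : IsTotalPreorderedCommGroup le')
    (hfin : Finite (simSubgroup le h)) (hfin' : Finite (simSubgroup le' h'))
    (hiso : Nonempty (simSubgroup le h ≃* simSubgroup le' h'))
    (hquot :
      letI : POGLang.Structure (G ⧸ simSubgroup le h) :=
        pogStructure _ (quotLe le h)
      letI : POGLang.Structure (G' ⧸ simSubgroup le' h') :=
        pogStructure _ (quotLe le' h')
      (G ⧸ simSubgroup le h) ≅[POGLang] (G' ⧸ simSubgroup le' h')) :
    letI : POGLang.Structure G := pogStructure G le
    letI : POGLang.Structure G' := pogStructure G' le'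
    G ≅[POGLang] G' := by
  classical
  obtain ⟨e⟩ := hiso
  haveI : Finite ↥(simSubgroup le h) := hfin
  haveI : Finite ↥(simSubgroup le' h') := hfin'
  haveI : Fintype ↥(simSubgroup le h) := Fintype.ofFinite _
  have hq : @ElementarilyEquivalent POGLang (G ⧸ simSubgroup le h) (G' ⧸ simSubgroup le' h')
      (pogStructure _ (quotLe le h)) (pogStructure _ (quotLe le' h')) := hquot
  have E1 := split_elementarilyEquivalent le h
  have E4 := split_elementarilyEquivalent le' h'
  have E2 := prod_elementarilyEquivalent (A := ↥(simSubgroup le h))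
    (quotLe le h) (quotLe le' h') hq
  have E3 := firstFactor_elementarilyEquivalent (quotLe le' h') e
  letI : POGLang.Structure G := pogStructure G le
  letI : POGLang.Structure G' := pogStructure G' le'
  letI : POGLang.Structure (↥(simSubgroup le h) × G ⧸ simSubgroup le h) :=
    prodStruct _ (quotLe le h)
  letI : POGLang.Structure (↥(simSubgroup le h) × G' ⧸ simSubgroup le' h') :=
    prodStruct _ (quotLe le' h')
  letI : POGLang.Structure (↥(simSubgroup le' h') × G' ⧸ simSubgroup le' h') :=
    prodStruct _ (quotLe le' h')
  exact E1.trans (E2.trans (E3.trans E4.symm))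
end

section
/- Let G be a totally pre-ordered abelian group such that H := {g ∈ G : g ∼ 1} is finite. Then H is a direct factor of G: there exists a subgroup Γ ≤ G with H ∩ Γ = {1} and H·Γ = G. Moreover, for any such complement Γ, the restriction of ≤ to Γ is antisymmetric, so (Γ, ≤) is a linearly ordered abelian group, and the restriction to Γ of the quotient map G → G/∼ is an order-preserving group isomorphism onto the ordered group (G/∼, ≤). -/
section Aux

variable {G : Type*} [CommGroup G] {le : G → G → Prop}

/-- `le g (g^n)` when `le 1 g` and `n ≥ 1`. -/
lemma tp_le_pow (h : IsTotalPreorderedCommGroup le) (g : G) (hg : le 1 g) :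
    ∀ n : ℕ, 1 ≤ n → le g (g ^ n) := by
  intro n hn
  induction n with
  | zero => omega
  | succ m ih =>
    rcases Nat.eq_or_lt_of_le hn with h1 | h1
    · rw [← h1]; simpa using h.refl g
    · have hm : 1 ≤ m := by omega
      have h2 : le (g ^ m) (g ^ (m + 1)) := by
        have := h.mul_right 1 g (g ^ m) hg
        rw [one_mul] at this
        rw [pow_succ]
        rw [mul_comm] at this
        exact this
      exact h.trans _ _ _ (ih hm) h2

lemma tp_pow_le (h : IsTotalPreorderedCommGroup le) (g : G) (hg : le g 1) :
    ∀ n : ℕ, 1 ≤ n → le (g ^ n) g := by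
  intro n hn
  induction n with
  | zero => omega
  | succ m ih =>
    rcases Nat.eq_or_lt_of_le hn with h1 | h1
    · rw [← h1]; simpa using h.refl g
    · have hm : 1 ≤ m := by omega
      have h2 : le (g ^ (m + 1)) (g ^ m) := by
        have := h.mul_right g 1 (g ^ m) hg
        rw [one_mul] at this
        rw [pow_succ, mul_comm]
        exact this
      exact h.trans _ _ _ h2 (ih hm)

/-- The quotient by `simSubgroup` is torsion-free: if `g^n ∼ 1` with `n ≥ 1` then `g ∼ 1`. -/
lemma mem_sim_of_pow_mem (h : IsTotalPreorderedCommGroup le) (g : G) (n : ℕ) (hn : 1 ≤ n)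
    (hgn : g ^ n ∈ simSubgroup le h) : g ∈ simSubgroup le h := by
  obtain ⟨hle, hge⟩ := hgn
  rcases h.total 1 g with h1 | h1
  · exact ⟨h.trans _ _ _ (tp_le_pow h g h1 n hn) hle, h1⟩
  · exact ⟨h1, h.trans _ _ _ hge (tp_pow_le h g h1 n hn)⟩

/-- A finitely generated subgroup `K` containing no new torsion over `H` admits a
retraction onto `H`, provided `H` is "pure": any `g` with `g ^ n ∈ H` lies in `H`. -/
lemma retraction_of_fg (H : Subgroup G) (K : Subgroup G) [Group.FG ↥K]
    (hpow : ∀ g : G, ∀ n : ℕ, 1 ≤ n → g ^ n ∈ H → g ∈ H) :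
    ∃ r : ↥K →* ↥H, ∀ x : ↥K, (x : G) ∈ H → (r x : G) = (x : G) := by
  set H' : Subgroup ↥K := H.subgroupOf K with hH'
  let Q := ↥K ⧸ H'
  let π : ↥K →* Q := QuotientGroup.mk' H'
  have hfgQ : Group.FG Q := Group.fg_of_surjective (f := π) (QuotientGroup.mk'_surjective H')
  haveI : AddGroup.FG (Additive Q) := @AddGroup.fg_of_group_fg Q _ hfgQ
  haveI : Module.Finite ℤ (Additive Q) := Module.Finite.iff_addGroup_fg.2 ‹_›
  haveI : IsAddTorsionFree (Additive Q) := by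
    rw [isAddTorsionFree_iff_not_isOfFinAddOrder]
    intro q hq hfin
    apply hq
    obtain ⟨n, hn, hpown⟩ := isOfFinAddOrder_iff_nsmul_eq_zero.1 hfin
    have hq' : (Additive.toMul q) ^ n = 1 := hpown
    obtain ⟨x, hx⟩ := QuotientGroup.mk'_surjective H' (Additive.toMul q)
    have hxn : x ^ n ∈ H' := by
      refine (QuotientGroup.eq_one_iff _).1 ?_
      show π (x ^ n) = 1
      rw [map_pow, hx, hq']
    have hxH : (x : G) ∈ H := by
      refine hpow _ n hn ?_
      simpa using Subgroup.mem_subgroupOf.1 hxn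
    have hx1 : x ∈ H' := Subgroup.mem_subgroupOf.2 hxH
    show q = 0
    have : Additive.toMul q = 1 := by
      rw [← hx]
      exact (QuotientGroup.eq_one_iff x).2 hx1
    exact this
  haveI : Module.Free ℤ (Additive Q) := Module.free_of_finite_type_torsion_free'
  let b := Module.Free.chooseBasis ℤ (Additive Q)
  have hsur := QuotientGroup.mk'_surjective H'
  choose p hp using fun i => hsur (Additive.toMul (b i))
  let σₗ : Additive Q →ₗ[ℤ] Additive ↥K := b.constr ℤ (fun i => Additive.ofMul (p i))
  let πₗ : Additive ↥K →ₗ[ℤ] Additive Q := (MonoidHom.toAdditive π).toIntLinearMap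
  have hid : πₗ.comp σₗ = LinearMap.id := by
    apply b.ext
    intro i
    simp only [LinearMap.comp_apply, LinearMap.id_apply, σₗ, Module.Basis.constr_basis]
    show Additive.ofMul (π (p i)) = b i
    rw [hp i]
    rfl
  have hsec : ∀ q : Q, π (Additive.toMul (σₗ (Additive.ofMul q))) = q := by
    intro q
    have := congrArg (fun f => f (Additive.ofMul q)) hid
    exact congrArg Additive.toMul this
  have hmem : ∀ x : ↥K,
      ((x : G) * ((Additive.toMul (σₗ (Additive.ofMul (π x))) : ↥K) : G)⁻¹) ∈ H := by
    intro x
    have h1 : x * (Additive.toMul (σₗ (Additive.ofMul (π x))))⁻¹ ∈ H' := by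
      refine (QuotientGroup.eq_one_iff _).1 ?_
      show π (x * (Additive.toMul (σₗ (Additive.ofMul (π x))))⁻¹) = 1
      rw [map_mul, map_inv, hsec]
      simp
    simpa using Subgroup.mem_subgroupOf.1 h1
  refine ⟨{ toFun := fun x => ⟨_, hmem x⟩, map_one' := ?_, map_mul' := ?_ }, ?_⟩
  · ext
    show (1 : G) * _ = 1
    rw [map_one]
    have h0 : σₗ (Additive.ofMul (1 : Q)) = 0 := by
      rw [show Additive.ofMul (1 : Q) = 0 from rfl, map_zero]
    rw [h0]
    show (1 : G) * ((1 : ↥K) : G)⁻¹ = 1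
    simp
  · intro x y
    ext
    show ((x * y : ↥K) : G) * _ = _
    rw [map_mul]
    have hadd : σₗ (Additive.ofMul (π x * π y))
        = σₗ (Additive.ofMul (π x)) + σₗ (Additive.ofMul (π y)) := by
      rw [show Additive.ofMul (π x * π y) = Additive.ofMul (π x) + Additive.ofMul (π y) from rfl,
        map_add]
    rw [hadd]
    show ((x * y : ↥K) : G) *
        (((Additive.toMul (σₗ (Additive.ofMul (π x))) *
          Additive.toMul (σₗ (Additive.ofMul (π y)))) : ↥K) : G)⁻¹ = _
    push_cast
    rw [mul_inv]
    exact mul_mul_mul_comm _ _ _ _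
  · intro x hx
    have hπx : π x = 1 := (QuotientGroup.eq_one_iff x).2 (Subgroup.mem_subgroupOf.2 hx)
    show (x : G) * _ = (x : G)
    rw [hπx]
    have h0 : σₗ (Additive.ofMul (1 : Q)) = 0 := by
      rw [show Additive.ofMul (1 : Q) = 0 from rfl, map_zero]
    rw [h0]
    show (x : G) * ((1 : ↥K) : G)⁻¹ = (x : G)
    simp

/-- By a compactness argument, a finite pure subgroup admits a global retraction. -/
lemma global_retraction (H : Subgroup G) (hfin : Finite ↥H)
    (hpow : ∀ g : G, ∀ n : ℕ, 1 ≤ n → g ^ n ∈ H → g ∈ H) :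
    ∃ r : G →* ↥H, ∀ x : ↥H, r (x : G) = x := by
  classical
  letI : TopologicalSpace ↥H := ⊥
  haveI : DiscreteTopology ↥H := ⟨rfl⟩
  let Z : (G × G) ⊕ ↥H → Set (G → ↥H) := fun i =>
    match i with
    | .inl (a, b) => {r | r (a * b) = r a * r b}
    | .inr x => {r | r (x : G) = x}
  have hZc : ∀ i, IsClosed (Z i) := by
    rintro (⟨a, b⟩ | x)
    · refine isClosed_eq (continuous_apply _) ?_
      have h1 : Continuous (fun r : G → ↥H => (r a, r b)) :=
        (continuous_apply a).prodMk (continuous_apply b)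
      exact (continuous_of_discreteTopology
        (f := fun p : ↥H × ↥H => p.1 * p.2)).comp h1
    · exact isClosed_eq (continuous_apply _) continuous_const
  have hne : (⋂ i, Z i).Nonempty := by
    by_contra hem
    rw [Set.not_nonempty_iff_eq_empty] at hem
    obtain ⟨t, ht⟩ := IsCompact.elim_finite_subfamily_closed isCompact_univ Z hZc
      (by rw [Set.univ_inter]; exact hem)
    let E : (G × G) ⊕ ↥H → Set G := fun i =>
      match i with
      | .inl (a, b) => {a, b}
      | .inr x => {(x : G)}
    let s : Set G := (H : Set G) ∪ ⋃ i ∈ t, E i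
    have hsfin : s.Finite := by
      refine Set.Finite.union (Set.finite_coe_iff.mp hfin) ?_
      refine Set.Finite.biUnion t.finite_toSet ?_
      rintro (⟨a, b⟩ | x) _
      · exact (Set.finite_singleton b).insert a
      · exact Set.finite_singleton _
    haveI := hsfin.to_subtype
    let K : Subgroup G := Subgroup.closure s
    haveI : Group.FG ↥K := Group.closure_finite_fg s
    obtain ⟨ρ, hρ⟩ := retraction_of_fg H K hpow
    have hsK : s ⊆ K := Subgroup.subset_closure
    let r₀ : G → ↥H := fun g => if hg : g ∈ K then ρ ⟨g, hg⟩ else 1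
    have hmem : r₀ ∈ Set.univ ∩ ⋂ i ∈ t, Z i := by
      refine ⟨trivial, ?_⟩
      rw [Set.mem_iInter₂]
      rintro (⟨a, b⟩ | x) hit
      · have ha : a ∈ K := hsK (Or.inr (Set.mem_biUnion hit (by simp [E])))
        have hb : b ∈ K := hsK (Or.inr (Set.mem_biUnion hit (by simp [E])))
        have hab : a * b ∈ K := mul_mem ha hb
        show r₀ (a * b) = r₀ a * r₀ b
        simp only [r₀, dif_pos ha, dif_pos hb, dif_pos hab]
        have : (⟨a * b, hab⟩ : ↥K) = ⟨a, ha⟩ * ⟨b, hb⟩ := rfl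
        rw [this, map_mul]
      · have hx : (x : G) ∈ K := hsK (Or.inr (Set.mem_biUnion hit (by simp [E])))
        show r₀ (x : G) = x
        simp only [r₀, dif_pos hx]
        exact Subtype.ext (hρ ⟨(x : G), hx⟩ x.2)
    rw [Set.univ_inter] at ht
    rw [ht] at hmem
    simp at hmem
  obtain ⟨r, hr⟩ := hne
  rw [Set.mem_iInter] at hr
  have hmul : ∀ a b : G, r (a * b) = r a * r b := fun a b => hr (.inl (a, b))
  have hfix : ∀ x : ↥H, r (x : G) = x := fun x => hr (.inr x)
  exact ⟨MonoidHom.mk' r hmul, hfix⟩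

end Aux

theorem sim_one_direct_factor_and_ordered_complement {G : Type*} [CommGroup G]
    (le : G → G → Prop) (h : IsTotalPreorderedCommGroup le)
    (hfin : Finite (simSubgroup le h)) :
    (∃ Γ : Subgroup G,
      (∀ g : G, g ∈ simSubgroup le h → g ∈ Γ → g = 1) ∧
      (∀ g : G, ∃ a ∈ simSubgroup le h, ∃ b ∈ Γ, g = a * b)) ∧
    (∀ Γ : Subgroup G,
      (∀ g : G, g ∈ simSubgroup le h → g ∈ Γ → g = 1) →
      (∀ g : G, ∃ a ∈ simSubgroup le h, ∃ b ∈ Γ, g = a * b) →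
      -- ≤ restricted to Γ is antisymmetric, so (Γ, ≤) is a linearly ordered group
      (∀ a b : G, a ∈ Γ → b ∈ Γ → le a b → le b a → a = b) ∧
      -- the restriction to Γ of the quotient map is a group isomorphism onto G/∼
      Function.Bijective (fun x : Γ => ((x : G) : G ⧸ simSubgroup le h)) ∧
      -- which is order-preserving (an order isomorphism onto (G/∼, ≤))
      (∀ a b : Γ, le (a : G) (b : G) ↔
        quotLe le h ((a : G) : G ⧸ simSubgroup le h) ((b : G) : G ⧸ simSubgroup le h))) := by
  set H : Subgroup G := simSubgroup le h with hH
  have hpow : ∀ g : G, ∀ n : ℕ, 1 ≤ n → g ^ n ∈ H → g ∈ H :=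
    fun g n hn hgn => mem_sim_of_pow_mem h g n hn hgn
  constructor
  · -- existence of a complement
    obtain ⟨r, hr⟩ := global_retraction H hfin hpow
    refine ⟨r.ker, ?_, ?_⟩
    · intro g hgH hgK
      have h1 : r g = ⟨g, hgH⟩ := hr ⟨g, hgH⟩
      have h2 : r g = 1 := hgK
      have := h1.symm.trans h2
      exact congrArg Subtype.val this
    · intro g
      refine ⟨(r g : G), (r g).2, (r g : G)⁻¹ * g, ?_, by group⟩
      show r ((r g : G)⁻¹ * g) = 1
      rw [map_mul, map_inv, hr (r g)]
      simp
  · -- properties of any complement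
    intro Γ hdisj hgen
    -- helper: multiplying by an element of H does not change the `le`-class
    have key₁ : ∀ x k : G, k ∈ H → le (x * k) x := by
      intro x k hk
      have := h.mul_right k 1 x hk.1
      rwa [one_mul, mul_comm k x] at this
    have key₂ : ∀ x k : G, k ∈ H → le x (x * k) := by
      intro x k hk
      have := h.mul_right 1 k x hk.2
      rwa [one_mul, mul_comm k x] at this
    refine ⟨?_, ⟨?_, ?_⟩, ?_⟩
    · -- antisymmetry on Γ
      intro a b ha hb hab hba
      have hmem : a * b⁻¹ ∈ H := by
        constructor
        · have := h.mul_right a b b⁻¹ hab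
          rwa [mul_inv_cancel] at this
        · have := h.mul_right b a b⁻¹ hba
          rwa [mul_inv_cancel] at this
      have : a * b⁻¹ = 1 := hdisj _ hmem (mul_mem ha (inv_mem hb))
      exact mul_inv_eq_one.1 this
    · -- injectivity
      intro x y hxy
      have hmem : (x : G)⁻¹ * y ∈ H := QuotientGroup.eq.1 hxy
      have : (x : G)⁻¹ * y = 1 :=
        hdisj _ hmem (mul_mem (inv_mem x.2) y.2)
      exact Subtype.ext (inv_mul_eq_one.1 this)
    · -- surjectivity
      intro q
      induction q using QuotientGroup.induction_on with
      | H g =>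
        obtain ⟨a, haH, b, hbΓ, hg⟩ := hgen g
        refine ⟨⟨b, hbΓ⟩, ?_⟩
        show ((b : G) : G ⧸ H) = (g : G ⧸ H)
        refine QuotientGroup.eq.2 ?_
        rw [hg]
        have : b⁻¹ * (a * b) = a := by
          rw [mul_comm a b, ← mul_assoc, inv_mul_cancel, one_mul]
        rw [this]
        exact haH
    · -- order-preserving
      intro a b
      constructor
      · intro hab
        exact ⟨(a : G), (b : G), rfl, rfl, hab⟩
      · rintro ⟨a', b', ha', hb', hle⟩
        have h₁ : a'⁻¹ * (a : G) ∈ H := QuotientGroup.eq.1 ha'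
        have h₂ : b'⁻¹ * (b : G) ∈ H := QuotientGroup.eq.1 hb'
        have s1 : le (a' * (a'⁻¹ * (a : G))) (b' * (a'⁻¹ * (a : G))) :=
          h.mul_right _ _ _ hle
        have e1 : a' * (a'⁻¹ * (a : G)) = (a : G) := by group
        rw [e1] at s1
        have e2 : b' * (a'⁻¹ * (a : G)) = (b : G) * ((b : G)⁻¹ * b' * (a'⁻¹ * (a : G))) := by
          group
        rw [e2] at s1
        have hk : (b : G)⁻¹ * b' * (a'⁻¹ * (a : G)) ∈ H := by
          have hbb : (b : G)⁻¹ * b' ∈ H := by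
            have := inv_mem h₂
            rwa [mul_inv, inv_inv, mul_comm] at this
          exact mul_mem hbb h₁
        exact h.trans _ _ _ s1 (key₁ (b : G) _ hk)
end

section
/- Let K₁ ⊆ K₂ be fields such that K₁ is relatively algebraically closed in K₂ (every element of K₂ algebraic over K₁ lies in K₁), and let O be a valuation subring of K₂ that is Henselian as a local ring. Then O ∩ K₁ is a Henselian valuation subring of K₁. -/
/- STATEMENT 17: Let K₁ ⊆ K₂ be fields with K₁ relatively algebraically closed
in K₂, and let O be a valuation subring of K₂ that is Henselian as a local
ring.  Then O ∩ K₁ is a Henselian valuation subring of K₁. -/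

theorem induced_valuation_henselian
    (K₂ : Type*) [Field K₂] (K₁ : Subfield K₂)
    (hrel : ∀ x : K₂,
      (∃ P : Polynomial K₁, P ≠ 0 ∧ Polynomial.eval₂ K₁.subtype x P = 0) →
      x ∈ K₁)
    (O : ValuationSubring K₂) (hO : HenselianLocalRing O) :
    ∃ O₁ : ValuationSubring K₁,
      (O₁ : Set K₁) = Subtype.val ⁻¹' (O : Set K₂) ∧ HenselianLocalRing O₁ := by
  classical
  set O₁ : ValuationSubring K₁ :=
    { toSubring := O.toSubring.comap K₁.subtype
      mem_or_inv_mem' := fun x => by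
        rcases O.mem_or_inv_mem (x : K₂) with h | h
        · exact Or.inl h
        · right
          simpa [Subring.mem_comap] using h } with hO₁def
  have memO₁ : ∀ x : K₁, x ∈ O₁ ↔ (x : K₂) ∈ O := fun x => Iff.rfl
  -- the natural ring hom O₁ → O
  let φ : O₁ →+* O :=
    { toFun := fun x => ⟨(x : K₁), x.2⟩
      map_one' := rfl
      map_mul' := fun _ _ => rfl
      map_zero' := rfl
      map_add' := fun _ _ => rfl }
  have hφval : ∀ x : O₁, ((φ x : K₂)) = ((x : K₁) : K₂) := fun _ => rfl
  have hφinj : Function.Injective φ := by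
    intro a b h
    apply Subtype.ext; apply Subtype.ext
    exact congrArg (fun y : O => (y : K₂)) h
  -- units transfer back
  have hunit : ∀ x : O₁, IsUnit (φ x) → IsUnit x := by
    intro x hx
    rcases hx with ⟨u, hu⟩
    have hinv : ((u⁻¹ : Oˣ) : O) * (u : O) = 1 := u.inv_mul
    have hx0 : (x : K₁) ≠ 0 := by
      rintro h0
      have : (u : O) = 0 := by
        apply Subtype.ext
        rw [hu]
        exact congrArg (fun y : K₁ => (y : K₂)) h0
      exact u.ne_zero (by simpa using this)
    -- ((x:K₁)⁻¹ : K₂) ∈ O since it equals the value of u⁻¹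
    have hval : (((u⁻¹ : Oˣ) : O) : K₂) = (((x : K₁)⁻¹ : K₁) : K₂) := by
      have h1 : (((u⁻¹ : Oˣ) : O) : K₂) * ((x : K₁) : K₂) = 1 := by
        have := congrArg (fun y : O => (y : K₂)) hinv
        simpa [hu, hφval] using this
      have hx2 : ((x : K₁) : K₂) ≠ 0 := by
        simpa using fun h => hx0 (Subtype.ext (by simpa using h))
      exact (eq_inv_of_mul_eq_one_left h1).trans (by simp)
    have hmem : ((x : K₁)⁻¹ : K₁) ∈ O₁ := by
      rw [memO₁, ← hval]
      exact ((u⁻¹ : Oˣ) : O).2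
    refine IsUnit.of_mul_eq_one (a := x) ⟨((x : K₁)⁻¹ : K₁), hmem⟩ ?_
    apply Subtype.ext
    simp [mul_inv_cancel₀ hx0]
  have hunit' : ∀ x : O₁, IsUnit x ↔ IsUnit (φ x) :=
    fun x => ⟨fun h => h.map φ, hunit x⟩
  refine ⟨O₁, rfl, ?_⟩
  constructor
  intro f hf a₀ ha₀ hd
  -- push everything to O
  have hg : (f.map φ).Monic := hf.map φ
  have heval : (f.map φ).eval (φ a₀) = φ (f.eval a₀) := by
    rw [Polynomial.eval_map, Polynomial.eval₂_hom]
  have hmem : (f.map φ).eval (φ a₀) ∈ IsLocalRing.maximalIdeal O := by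
    rw [heval, IsLocalRing.mem_maximalIdeal, mem_nonunits_iff]
    intro hu
    have := (hunit' (f.eval a₀)).mpr hu
    rw [IsLocalRing.mem_maximalIdeal, mem_nonunits_iff] at ha₀
    exact ha₀ this
  have hd' : IsUnit ((f.map φ).derivative.eval (φ a₀)) := by
    rw [Polynomial.derivative_map, Polynomial.eval_map, Polynomial.eval₂_hom]
    exact hd.map φ
  obtain ⟨a, ha, ham⟩ := hO.is_henselian (f.map φ) hg (φ a₀) hmem hd'
  -- the root is algebraic over K₁, hence lies in K₁
  have hroot2 : Polynomial.eval₂ (O.subtype.comp φ) ((a : K₂)) f = 0 := by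
    have h1 : Polynomial.eval₂ (O.subtype.comp φ) ((a : K₂)) f
        = Polynomial.eval₂ O.subtype ((a : K₂)) (f.map φ) :=
      (Polynomial.eval₂_map φ O.subtype _).symm
    have h2 : Polynomial.eval₂ O.subtype (O.subtype a) (f.map φ)
        = O.subtype ((f.map φ).eval a) := Polynomial.eval₂_at_apply _ _
    rw [h1]
    show Polynomial.eval₂ O.subtype (O.subtype a) (f.map φ) = 0
    rw [h2, ha.eq_zero, map_zero]
  have haK₁ : (a : K₂) ∈ K₁ := by
    apply hrel
    refine ⟨f.map (O₁.subtype), ?_, ?_⟩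
    · intro h0
      have : (f.map O₁.subtype).coeff f.natDegree = 0 := by rw [h0]; simp
      rw [Polynomial.coeff_map, hf.coeff_natDegree] at this
      simp at this
    · rw [Polynomial.eval₂_map]
      have : K₁.subtype.comp O₁.subtype = O.subtype.comp φ := by
        ext x; rfl
      rw [this]
      exact hroot2
  set A : O₁ := ⟨⟨(a : K₂), haK₁⟩, a.2⟩ with hA
  have hφA : φ A = a := Subtype.ext rfl
  have h3 : (f.map φ).eval (φ A) = φ (f.eval A) := by
    rw [Polynomial.eval_map, Polynomial.eval₂_hom]
  refine ⟨A, ?_, ?_⟩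
  · -- A is a root of f
    apply hφinj
    show φ (f.eval A) = φ 0
    rw [φ.map_zero, ← h3, hφA]
    exact ha.eq_zero
  · rw [IsLocalRing.mem_maximalIdeal, mem_nonunits_iff, hunit']
    rw [φ.map_sub, hφA]
    rw [IsLocalRing.mem_maximalIdeal, mem_nonunits_iff] at ham
    exact ham
end
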